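/- (Lemma 1) The K-linear map obtained by restricting the substitution homomorphism u to the space R_𝐝 of multihomogeneous polynomials of multidegree 𝐝 = (d_1,…,d_s) is injective: if f ∈ R_𝐝 and u(f) = 0, then f = 0. -/

import Mathlib

open MvPolynomial

/-- Variables of `R`: `x_{i,j}` for `j : Fin s`, `i : Fin (n j + 1)` (index `0` is `x_{0,j}`). -/
abbrev RVar (s : ℕ) (n : Fin s → ℕ) := Σ j : Fin s, Fin (n j + 1)

/-- Variables of `S`: `none` is `z_0`, `some ⟨j,i⟩` is `z_{i+1,j}`. -/
abbrev SVar (s : ℕ) (n : Fin s → ℕ) := Option (Σ j : Fin s, Fin (n j))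

/-- `f` is multihomogeneous of multidegree `d`. -/
def MultiHomog {K : Type*} [CommSemiring K] {s : ℕ} {n : Fin s → ℕ} (d : Fin s → ℕ)
    (f : MvPolynomial (RVar s n) K) : Prop :=
  ∀ m ∈ f.support, ∀ j : Fin s, ∑ i : Fin (n j + 1), m ⟨j, i⟩ = d j

/-- The substitution `u : R → S`, `x_{0,j} ↦ z_0`, `x_{i,j} ↦ z_{i,j}` for `i ≥ 1`. -/
noncomputable def subst (K : Type*) [CommSemiring K] (s : ℕ) (n : Fin s → ℕ) :
    MvPolynomial (RVar s n) K →ₐ[K] MvPolynomial (SVar s n) K :=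
  aeval fun v => if h : (v.2 : ℕ) = 0 then X none
    else X (some ⟨v.1, ⟨(v.2 : ℕ) - 1, by have := v.2.isLt; omega⟩⟩)


noncomputable def phi {s : ℕ} {n : Fin s → ℕ} (m : RVar s n →₀ ℕ) : SVar s n →₀ ℕ :=
  Finsupp.equivFunOnFinite.symm fun w => match w with
    | none => ∑ j, m ⟨j, 0⟩
    | some ⟨j, i⟩ => m ⟨j, i.succ⟩

@[simp] lemma phi_none {s : ℕ} {n : Fin s → ℕ} (m : RVar s n →₀ ℕ) :
    phi m none = ∑ j, m ⟨j, 0⟩ := rfl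

@[simp] lemma phi_some {s : ℕ} {n : Fin s → ℕ} (m : RVar s n →₀ ℕ) (j : Fin s) (i : Fin (n j)) :
    phi m (some ⟨j, i⟩) = m ⟨j, i.succ⟩ := rfl

lemma subst_monomial {K : Type*} [CommSemiring K] {s : ℕ} {n : Fin s → ℕ}
    (m : RVar s n →₀ ℕ) (c : K) :
    subst K s n (monomial m c) = monomial (phi m) c := by
  rw [subst, aeval_monomial, monomial_eq]
  congr 1
  rw [Finsupp.prod_fintype _ _ (fun v => pow_zero _),
      Finsupp.prod_fintype _ _ (fun v => pow_zero _)]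
  rw [Fintype.prod_option, ← Finset.univ_sigma_univ, Finset.prod_sigma,
      ← Finset.univ_sigma_univ, Finset.prod_sigma]
  simp only [Fin.prod_univ_succ, Fin.val_zero, Fin.val_succ, Nat.add_sub_cancel, Fin.eta,
    Nat.succ_ne_zero, dite_true, dite_false, phi_none, phi_some, dif_pos, reduceCtorEq, ↓reduceDIte]
  rw [Finset.prod_mul_distrib, Finset.prod_pow_eq_pow_sum]

lemma phi_inj {s : ℕ} {n : Fin s → ℕ} {d : Fin s → ℕ} {m m' : RVar s n →₀ ℕ}
    (hm : ∀ j : Fin s, ∑ i : Fin (n j + 1), m ⟨j, i⟩ = d j)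
    (hm' : ∀ j : Fin s, ∑ i : Fin (n j + 1), m' ⟨j, i⟩ = d j)
    (h : phi m = phi m') : m = m' := by
  ext ⟨j, i⟩
  have hsome : ∀ i' : Fin (n j), m ⟨j, i'.succ⟩ = m' ⟨j, i'.succ⟩ := fun i' => by
    have := congrArg (fun g => g (some ⟨j, i'⟩)) h
    simpa using this
  induction i using Fin.cases with
  | zero =>
    have h1 := hm j
    have h2 := hm' j
    rw [Fin.sum_univ_succ] at h1 h2
    have : ∑ i : Fin (n j), m ⟨j, i.succ⟩ = ∑ i : Fin (n j), m' ⟨j, i.succ⟩ :=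
      Finset.sum_congr rfl fun i' _ => hsome i'
    omega
  | succ i' => exact hsome i'

/-- **Lemma 1.** The restriction of `u` to `R_𝐝` is injective:
if `f` is multihomogeneous of multidegree `𝐝` and `u f = 0`, then `f = 0`. -/
theorem stmt2 (K : Type*) [Field K] (s : ℕ) (hs : 0 < s) (n : Fin s → ℕ) (hn : ∀ j, 0 < n j)
    (d : Fin s → ℕ) (f : MvPolynomial (RVar s n) K) (hf : MultiHomog d f)
    (h : subst K s n f = 0) : f = 0 := by
  ext m
  rw [coeff_zero]
  by_cases hmem : m ∈ f.support
  · have hrw : subst K s n f = ∑ m' ∈ f.support, monomial (phi m') (coeff m' f) := by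
      conv_lhs => rw [f.as_sum]
      rw [map_sum]
      exact Finset.sum_congr rfl fun m' _ => subst_monomial m' _
    have := congrArg (coeff (phi m)) (hrw ▸ h)
    rw [coeff_zero, coeff_sum] at this
    simp only [coeff_monomial] at this
    rw [Finset.sum_eq_single m] at this
    · simpa using this
    · intro m' hm' hne
      rw [if_neg]
      intro heq
      exact hne (phi_inj (hf m' hm') (hf m hmem) heq)
    · intro hmem'
      exact absurd hmem hmem'
  · simpa using hmem
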